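/- Let n ≥ 2 and k ≥ n + 3. There exists a full k-coloring Γ of the standard n-sphere S^n such that every (n−1)-sphere in S^n contains at most n + 2 colors; that is, for every affine hyperplane H of ℝ^{n+1} whose distance from the origin is strictly less than 1, the image Γ(S^n ∩ H) has at most n + 2 elements. -/

import Mathlib

open Module

variable {E : Type*} [NormedAddCommGroup E] [InnerProductSpace ℝ E]

local notation "⟪" x ", " y "⟫" => @inner ℝ _ _ x y

lemma curve_norm_one {x v : E} (hx : ‖x‖ = 1) (hv : ‖v‖ = 1) (hxv : ⟪x, v⟫ = 0) (t : ℝ) :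
    ‖Real.cos t • x + Real.sin t • v‖ = 1 := by
  have key := norm_add_sq_real (Real.cos t • x) (Real.sin t • v)
  rw [real_inner_smul_left, real_inner_smul_right, hxv, norm_smul, norm_smul, hx, hv] at key
  simp only [Real.norm_eq_abs, mul_one, mul_zero] at key
  have h2 : ‖Real.cos t • x + Real.sin t • v‖ ^ 2 = 1 := by
    rw [key]
    have := Real.sin_sq_add_cos_sq t
    nlinarith [sq_abs (Real.cos t), sq_abs (Real.sin t)]
  nlinarith [norm_nonneg (Real.cos t • x + Real.sin t • v)]

lemma dense_sphere_ne [FiniteDimensional ℝ E] (h2 : 2 ≤ finrank ℝ E)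
    (a : E) (ha : a ≠ 0) (b : ℝ) :
    Dense {x : Metric.sphere (0 : E) 1 | ⟪a, (x : E)⟫ ≠ b} := by
  rw [Metric.dense_iff]
  intro x₀ r hr
  by_contra hcon
  rw [Set.not_nonempty_iff_eq_empty] at hcon
  have hall : ∀ y : Metric.sphere (0 : E) 1, dist y x₀ < r → ⟪a, (y : E)⟫ = b := by
    intro y hy
    by_contra hne
    exact Set.eq_empty_iff_forall_notMem.mp hcon y ⟨Metric.mem_ball.mpr hy, hne⟩
  have hx1 : ‖(x₀ : E)‖ = 1 := by
    simpa using mem_sphere_zero_iff_norm.mp x₀.2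
  have main : ∀ v : E, ‖v‖ = 1 → ⟪(x₀ : E), v⟫ = 0 →
      ⟪a, (x₀ : E)⟫ = b ∧ b = 0 ∧ ⟪a, v⟫ = 0 := by
    intro v hv hov
    set g : ℝ → E := fun t => Real.cos t • (x₀ : E) + Real.sin t • v with hg
    have hgS : ∀ t, g t ∈ Metric.sphere (0 : E) 1 := fun t =>
      mem_sphere_zero_iff_norm.mpr (curve_norm_one hx1 hv hov t)
    have hcont : Continuous g := by fun_prop
    have h0 : g 0 = (x₀ : E) := by simp [hg]
    obtain ⟨δ, hδ, hδball⟩ := Metric.continuous_iff.mp hcont 0 r hr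
    have heq : ∀ t : ℝ, |t| < δ →
        Real.cos t * ⟪a, (x₀ : E)⟫ + Real.sin t * ⟪a, v⟫ = b := by
      intro t ht
      have hd : dist (g t) (g 0) < r := hδball t (by simpa [Real.dist_eq] using ht)
      have := hall ⟨g t, hgS t⟩ (by rw [Subtype.dist_eq]; simpa [h0] using hd)
      simpa [hg, inner_add_right, real_inner_smul_right] using this
    set t0 : ℝ := min (δ / 2) (1 / 2) with ht0
    have ht0pos : 0 < t0 := lt_min (by linarith) (by norm_num)
    have ht0le : t0 ≤ 1 / 2 := min_le_right _ _
    have ht0δ : |t0| < δ := by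
      rw [abs_of_pos ht0pos]
      calc t0 ≤ δ / 2 := min_le_left _ _
        _ < δ := by linarith
    have hpi := Real.pi_gt_three
    have hcoslt : Real.cos t0 ≠ 1 := by
      intro h
      rw [Real.cos_eq_one_iff_of_lt_of_lt (by linarith) (by linarith)] at h
      exact (ne_of_gt ht0pos) h
    have hsinpos : 0 < Real.sin t0 := Real.sin_pos_of_pos_of_lt_pi ht0pos (by linarith)
    have e0 := heq 0 (by simpa using hδ)
    simp only [Real.cos_zero, Real.sin_zero, one_mul, zero_mul, add_zero] at e0
    have e1 := heq t0 ht0δ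
    have e2 := heq (-t0) (by rwa [abs_neg])
    rw [Real.cos_neg, Real.sin_neg] at e2
    have hb : b = 0 := by
      have hh : b * (Real.cos t0 - 1) = 0 := by
        linear_combination (1 / 2) * e1 + (1 / 2) * e2 - Real.cos t0 * e0
      rcases mul_eq_zero.mp hh with h | h
      · exact h
      · exact absurd (by linarith) hcoslt
    have hβ : ⟪a, v⟫ = 0 := by
      have hh : Real.sin t0 * ⟪a, v⟫ = 0 := by
        linear_combination (1 / 2) * e1 - (1 / 2) * e2
      rcases mul_eq_zero.mp hh with h | h
      · exact absurd h (ne_of_gt hsinpos)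
      · exact h
    exact ⟨e0, hb, hβ⟩
  -- find one unit vector orthogonal to x₀
  have hxne : (x₀ : E) ≠ 0 := by
    intro h; rw [h, norm_zero] at hx1; norm_num at hx1
  set K : Submodule ℝ E := ℝ ∙ (x₀ : E) with hK
  have hKrank : finrank ℝ K = 1 := finrank_span_singleton hxne
  have horthrank : 1 ≤ finrank ℝ Kᗮ := by
    have := K.finrank_add_finrank_orthogonal
    omega
  have hKne : Kᗮ ≠ ⊥ := by
    intro h
    rw [h] at horthrank
    simp at horthrank
  obtain ⟨v0, hv0K, hv0⟩ := (Submodule.ne_bot_iff _).mp hKne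
  have hv0n : ‖v0‖ ≠ 0 := norm_ne_zero_iff.mpr hv0
  set v1 : E := ‖v0‖⁻¹ • v0 with hv1
  have hv1n : ‖v1‖ = 1 := norm_smul_inv_norm hv0
  have hv1o : ⟪(x₀ : E), v1⟫ = 0 := by
    have := (Submodule.mem_orthogonal K v0).mp hv0K (x₀ : E) (Submodule.mem_span_singleton_self _)
    rw [hv1, real_inner_smul_right, this, mul_zero]
  obtain ⟨hα, hb, -⟩ := main v1 hv1n hv1o
  have hax : ⟪a, (x₀ : E)⟫ = 0 := by rw [hα, hb]
  -- second application with v = a / ‖a‖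
  have han : ‖a‖ ≠ 0 := norm_ne_zero_iff.mpr ha
  set v2 : E := ‖a‖⁻¹ • a with hv2
  have hv2n : ‖v2‖ = 1 := norm_smul_inv_norm ha
  have hv2o : ⟪(x₀ : E), v2⟫ = 0 := by
    rw [hv2, real_inner_smul_right, real_inner_comm, hax, mul_zero]
  obtain ⟨-, -, hβ⟩ := main v2 hv2n hv2o
  rw [hv2, real_inner_smul_right, real_inner_self_eq_norm_sq, pow_two, ← mul_assoc,
    inv_mul_cancel₀ han, one_mul] at hβ
  exact han hβ

lemma sphere_avoid [FiniteDimensional ℝ E] (h2 : 2 ≤ finrank ℝ E)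
    {ι : Type*} [Finite ι] (a : ι → E) (b : ι → ℝ) (ha : ∀ i, a i ≠ 0) :
    ∃ x : E, ‖x‖ = 1 ∧ ∀ i, ⟪a i, x⟫ ≠ b i := by
  haveI : Nontrivial E := by
    apply nontrivial_of_finrank_pos (R := ℝ); omega
  haveI : CompleteSpace (Metric.sphere (0 : E) 1) :=
    (Metric.isClosed_sphere).completeSpace_coe
  haveI : Nonempty (Metric.sphere (0 : E) 1) :=
    (NormedSpace.sphere_nonempty.mpr zero_le_one).to_subtype
  haveI : Countable ι := Finite.to_countable
  have hd : Dense (⋂ i, {x : Metric.sphere (0 : E) 1 | ⟪a i, (x : E)⟫ ≠ b i}) := by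
    apply dense_iInter_of_isOpen
    · intro i
      have hc : Continuous fun x : Metric.sphere (0 : E) 1 => ⟪a i, (x : E)⟫ :=
        Continuous.inner continuous_const continuous_subtype_val
      exact (isOpen_compl_singleton).preimage hc
    · intro i
      exact dense_sphere_ne h2 (a i) (ha i) (b i)
  obtain ⟨x, hx⟩ := hd.nonempty
  refine ⟨(x : E), mem_sphere_zero_iff_norm.mp x.2, fun i => ?_⟩
  exact Set.mem_iInter.mp hx i

lemma proper_affine_normal [FiniteDimensional ℝ E] [Nontrivial E]
    {A : AffineSubspace ℝ E} (hA : A ≠ ⊤) :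
    ∃ a : E, a ≠ 0 ∧ ∃ b : ℝ, ∀ x ∈ A, ⟪a, x⟫ = b := by
  rcases (A : Set E).eq_empty_or_nonempty with he | ⟨p, hp⟩
  · obtain ⟨a, ha⟩ := exists_ne (0 : E)
    exact ⟨a, ha, 0, fun x hx => absurd (he ▸ hx : x ∈ (∅ : Set E)) (Set.notMem_empty x)⟩
  · have hdir : A.direction ≠ ⊤ := by
      intro h
      exact hA ((AffineSubspace.direction_eq_top_iff_of_nonempty ⟨p, hp⟩).mp h)
    have horth : A.directionᗮ ≠ ⊥ :=
      fun h => hdir (Submodule.orthogonal_eq_bot_iff.mp h)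
    obtain ⟨a, haA, ha0⟩ := (Submodule.ne_bot_iff _).mp horth
    refine ⟨a, ha0, ⟪a, p⟫, fun x hx => ?_⟩
    have hmem : x -ᵥ p ∈ A.direction := AffineSubspace.vsub_mem_direction hx hp
    have h0 : ⟪x -ᵥ p, a⟫ = 0 := (Submodule.mem_orthogonal _ _).mp haA _ hmem
    rw [vsub_eq_sub, real_inner_comm, inner_sub_right] at h0
    linarith

lemma affineIndependent_insert_set {s : Set E} {p : E}
    (hs : AffineIndependent ℝ ((↑) : s → E)) (hp : p ∉ affineSpan ℝ s) :
    AffineIndependent ℝ ((↑) : ↥(insert p s) → E) := by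
  have hps : p ∉ s := fun h => hp (mem_affineSpan ℝ h)
  set i : ↥(insert p s) := ⟨p, Set.mem_insert _ _⟩ with hi
  apply AffineIndependent.affineIndependent_of_notMem_span (i := i)
  · let e : {y : ↥(insert p s) // y ≠ i} ≃ s :=
      { toFun := fun y => ⟨y.1.1, by
          rcases y.1.2 with h | h
          · exact absurd (Subtype.ext h) y.2
          · exact h⟩
        invFun := fun x => ⟨⟨(x : E), Set.mem_insert_of_mem _ x.2⟩, by
          intro h
          apply hps
          have : (x : E) = p := congrArg Subtype.val h
          exact this ▸ x.2⟩
        left_inv := fun y => by ext; rfl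
        right_inv := fun x => by ext; rfl }
    have := (affineIndependent_equiv e).mpr hs
    exact this
  · have himg : ((fun y : ↥(insert p s) => (y : E)) '' {x | x ≠ i}) = s := by
      ext y
      constructor
      · rintro ⟨⟨y', hy'⟩, hne, rfl⟩
        rcases hy' with h | h
        · exact absurd (Subtype.ext h) hne
        · exact h
      · intro hy
        refine ⟨⟨y, Set.mem_insert_of_mem _ hy⟩, ?_, rfl⟩
        intro h
        apply hps
        have : y = p := congrArg Subtype.val h
        exact this ▸ hy
    rw [himg]
    exact hp

lemma finset_span_ne_top [FiniteDimensional ℝ E] (h2 : 2 ≤ finrank ℝ E)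
    (S : Finset E) (hS : S.card ≤ finrank ℝ E) :
    affineSpan ℝ (S : Set E) ≠ ⊤ := by
  haveI : Nontrivial E := by
    apply nontrivial_of_finrank_pos (R := ℝ); omega
  intro htop
  rcases S.eq_empty_or_nonempty with rfl | hne
  · rw [Finset.coe_empty, AffineSubspace.span_empty] at htop
    exact AffineSubspace.bot_ne_top ℝ E E htop
  · have hcard : 1 ≤ S.card := Finset.card_pos.mpr hne
    have hb : finrank ℝ (vectorSpan ℝ (S : Set E)) ≤ S.card - 1 := by
      have hrange : Set.range ((↑) : ↥S → E) = (S : Set E) := Subtype.range_coe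
      have := finrank_vectorSpan_range_le ℝ ((↑) : ↥S → E)
        (n := S.card - 1) (by rw [Fintype.card_coe]; omega)
      rwa [hrange] at this
    have hv : vectorSpan ℝ (S : Set E) = ⊤ := by
      rw [← direction_affineSpan, htop, AffineSubspace.direction_top]
    rw [hv, finrank_top] at hb
    omega

lemma exists_genpos [FiniteDimensional ℝ E] (h2 : 2 ≤ finrank ℝ E) (m : ℕ) :
    ∃ T : Finset E, T.card = m ∧ (∀ x ∈ T, ‖x‖ = 1) ∧
      ∀ S : Finset E, S ⊆ T → S.card ≤ finrank ℝ E + 1 →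
        AffineIndependent ℝ ((↑) : ↥(S : Set E) → E) := by
  classical
  induction m with
  | zero =>
    refine ⟨∅, rfl, by simp, ?_⟩
    intro S hS _
    rw [Finset.subset_empty] at hS
    subst hS
    rw [Finset.coe_empty]
    exact affineIndependent_of_subsingleton ℝ _
  | succ m ih =>
    obtain ⟨T, hTcard, hTs, hTgp⟩ := ih
    -- index of small subsets
    set P : Finset (Finset E) := T.powerset.filter (fun S => S.card ≤ finrank ℝ E) with hP
    have hproper : ∀ S : Finset E, S ∈ P → affineSpan ℝ (S : Set E) ≠ ⊤ := by
      intro S hSP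
      rw [hP, Finset.mem_filter] at hSP
      exact finset_span_ne_top h2 S hSP.2
    haveI : Nontrivial E := by
      apply nontrivial_of_finrank_pos (R := ℝ); omega
    have hnormal : ∀ S : ↥P, ∃ a : E, a ≠ 0 ∧ ∃ b : ℝ,
        ∀ x ∈ affineSpan ℝ ((S : Finset E) : Set E), ⟪a, x⟫ = b := by
      intro S
      exact proper_affine_normal (hproper S S.2)
    choose av hav bv hb using hnormal
    obtain ⟨p, hpn, hpne⟩ := sphere_avoid h2 av bv hav
    have hpnot : ∀ S : Finset E, S ⊆ T → S.card ≤ finrank ℝ E →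
        p ∉ affineSpan ℝ (S : Set E) := by
      intro S hST hScard hmem
      have hSP : S ∈ P := by
        rw [hP, Finset.mem_filter, Finset.mem_powerset]
        exact ⟨hST, hScard⟩
      exact hpne ⟨S, hSP⟩ (hb ⟨S, hSP⟩ p hmem)
    have hpT : p ∉ T := by
      intro hpT
      exact hpnot {p} (Finset.singleton_subset_iff.mpr hpT)
        (by rw [Finset.card_singleton]; omega) (mem_affineSpan ℝ (by simp))
    refine ⟨insert p T, by rw [Finset.card_insert_of_notMem hpT, hTcard], ?_, ?_⟩
    · intro x hx
      rcases Finset.mem_insert.mp hx with rfl | hx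
      · exact hpn
      · exact hTs x hx
    · intro S hS hScard
      by_cases hpS : p ∈ S
      · set S₀ : Finset E := S.erase p with hS₀
        have hS₀T : S₀ ⊆ T := by
          rw [hS₀, ← Finset.subset_insert_iff]
          exact hS
        have hS₀card : S₀.card ≤ finrank ℝ E := by
          rw [hS₀, Finset.card_erase_of_mem hpS]
          omega
        have hind : AffineIndependent ℝ ((↑) : ↥(S₀ : Set E) → E) :=
          hTgp S₀ hS₀T (by omega)
        have hpspan : p ∉ affineSpan ℝ (S₀ : Set E) := hpnot S₀ hS₀T hS₀card
        have hins := affineIndependent_insert_set hind hpspan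
        rw [← Finset.insert_erase hpS, Finset.coe_insert]
        exact hins
      · exact hTgp S (by rwa [← Finset.subset_insert_iff_of_notMem hpS]) hScard

/-- Sharpness: for `n ≥ 2` and any `k ≥ n + 3` there is a full `k`-coloring of the standard
`n`-sphere in which every `(n-1)`-sphere contains at most `n + 2` colors. -/
theorem sharp_k_coloring (n k : ℕ) (hn : 2 ≤ n) (hk : n + 3 ≤ k) :
    ∃ Γ : (Metric.sphere (0 : EuclideanSpace ℝ (Fin (n + 1))) 1) → Fin k,
      Function.Surjective Γ ∧
      ∀ H : AffineSubspace ℝ (EuclideanSpace ℝ (Fin (n + 1))),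
        Module.finrank ℝ H.direction = n → (∃ x ∈ H, ‖x‖ < 1) →
        (Γ '' {p | (p : EuclideanSpace ℝ (Fin (n + 1))) ∈ H}).ncard ≤ n + 2 := by
  classical
  set E := EuclideanSpace ℝ (Fin (n + 1)) with hE
  have hfr : finrank ℝ E = n + 1 := finrank_euclideanSpace_fin
  have h2 : 2 ≤ finrank ℝ E := by omega
  obtain ⟨T, hTcard, hTs, hTgp⟩ := exists_genpos h2 (k - 1)
  -- the coloring
  set g : E → Fin k := fun y =>
    if h : y ∈ T then ⟨(T.equivFin ⟨y, h⟩).val + 1, by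
      have := (T.equivFin ⟨y, h⟩).2
      omega⟩
    else ⟨0, by omega⟩ with hg
  refine ⟨fun x => g (x : E), ?_, ?_⟩
  · -- surjectivity
    intro c
    by_cases hc0 : c.val = 0
    · -- find a sphere point not in T
      have hTne : ∀ t : ↥T, (t : E) ≠ 0 := by
        intro t h
        have := hTs _ t.2
        rw [h, norm_zero] at this
        norm_num at this
      obtain ⟨x, hxn, hxne⟩ := sphere_avoid h2 (fun t : ↥T => (t : E)) (fun _ => 1) hTne
      have hxT : x ∉ T := by
        intro hxT
        apply hxne ⟨x, hxT⟩
        rw [real_inner_self_eq_norm_sq, hxn]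
        norm_num
      refine ⟨⟨x, mem_sphere_zero_iff_norm.mpr hxn⟩, ?_⟩
      simp only [hg, dif_neg hxT]
      exact Fin.ext (by simp [hc0])
    · set i : Fin T.card := ⟨c.val - 1, by rw [hTcard]; omega⟩ with hi
      set x : ↥T := T.equivFin.symm i with hx
      have hxs : (x : E) ∈ Metric.sphere (0 : E) 1 :=
        mem_sphere_zero_iff_norm.mpr (hTs _ x.2)
      refine ⟨⟨(x : E), hxs⟩, ?_⟩
      simp only [hg, dif_pos x.2]
      have hsub : (⟨(x : E), x.2⟩ : ↥T) = x := rfl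
      apply Fin.ext
      show (T.equivFin x).val + 1 = c.val
      rw [hx, Equiv.apply_symm_apply]
      simp [hi]; omega
  · -- hyperplane bound
    intro H hdim _
    set F : Finset E := T.filter (fun y => y ∈ H) with hF
    have hFcard : F.card ≤ n + 1 := by
      by_contra hcon
      push_neg at hcon
      obtain ⟨S, hSF, hScard⟩ := Finset.exists_subset_card_eq (s := F) (n := n + 2) (by omega)
      have hST : S ⊆ T := hSF.trans (Finset.filter_subset _ _)
      have hind := hTgp S hST (by omega)
      have hfrS : finrank ℝ (vectorSpan ℝ (S : Set E)) = n + 1 := by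
        have := hind.finrank_vectorSpan (n := n + 1)
          (by simp only [Finset.coe_sort_coe, Fintype.card_coe]; omega)
        rwa [Subtype.range_coe] at this
      have hle : vectorSpan ℝ (S : Set E) ≤ H.direction := by
        apply vectorSpan_mono
        intro y hy
        have : y ∈ S := by exact_mod_cast hy
        exact (Finset.mem_filter.mp (hSF this)).2
      have := Submodule.finrank_mono hle
      rw [hfrS, hdim] at this
      omega
    have hsub : (fun x : Metric.sphere (0 : E) 1 => g (x : E)) ''
        {p : Metric.sphere (0 : E) 1 | (p : E) ∈ H} ⊆
        insert (⟨0, by omega⟩ : Fin k) (g '' (F : Set E)) := by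
      rintro _ ⟨x, hx, rfl⟩
      by_cases h : (x : E) ∈ T
      · exact Set.mem_insert_of_mem _ ⟨(x : E), by
          rw [hF, Finset.coe_filter]
          exact ⟨h, hx⟩, rfl⟩
      · simp only [hg, dif_neg h]
        exact Set.mem_insert _ _
    calc ((fun x : Metric.sphere (0 : E) 1 => g (x : E)) ''
          {p : Metric.sphere (0 : E) 1 | (p : E) ∈ H}).ncard
        ≤ (insert (⟨0, by omega⟩ : Fin k) (g '' (F : Set E))).ncard :=
          Set.ncard_le_ncard hsub (Set.toFinite _)
      _ ≤ (g '' (F : Set E)).ncard + 1 := Set.ncard_insert_le _ _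
      _ ≤ (F : Set E).ncard + 1 := by
          have := Set.ncard_image_le (f := g) (s := (F : Set E)) (Set.toFinite _)
          omega
      _ ≤ n + 2 := by
          rw [Set.ncard_coe_finset]
          omega
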